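/- arXiv:2502.11346 — 3 statements merged into one kernel-verified Lean document; each statement's English description precedes it below -/
import Mathlib

section
/- Let M and M₀ be positive integers with M₀ dividing M, set d = M/M₀, and fix an integer offset s with 0 ≤ s < d. Let F̄ be the M₀×M partial DFT matrix with entries F̄_{i,k} = exp(−2πi·(s + i·d)·k / M) for i = 0, …, M₀−1 and k = 0, …, M−1. Then for every vector h ∈ ℂ^M whose entries satisfy h_k = 0 for all k ≥ K, where K is an integer with K ≤ M₀, one has (1/M₀)·‖F̄ h‖² = ‖h‖², where ‖·‖ is the Euclidean norm. -/
open Matrix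

open Complex Finset in
/-- Core of Lemma 0: for reference signals uniformly inserted on `M₀` of the
`M` subcarriers (rows `s, s+d, …, s+(M₀-1)d` of the `M × M` DFT matrix, where
`d = M / M₀`), the average power `(1/M₀)‖F̄ h‖²` over the sampled subcarriers
equals the full power `‖h‖²` whenever `h` is supported on its first `K ≤ M₀`
coordinates. -/
theorem stmt_5 (M M₀ K : ℕ) (hM₀ : 0 < M₀) (hdvd : M₀ ∣ M) (s : ℕ)
    (hs : s < M / M₀) (hK : K ≤ M₀)
    (F : Matrix (Fin M₀) (Fin M) ℂ)
    (hF : ∀ (i : Fin M₀) (k : Fin M),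
      F i k = Complex.exp (-2 * Real.pi * Complex.I *
        ((s : ℂ) + ((i : ℕ) : ℂ) * ((M / M₀ : ℕ) : ℂ)) * ((k : ℕ) : ℂ) / (M : ℂ)))
    (h : Fin M → ℂ) (hh : ∀ k : Fin M, K ≤ (k : ℕ) → h k = 0) :
    (1 / M₀ : ℝ) * ∑ i, ‖(F *ᵥ h) i‖ ^ 2 = ∑ k, ‖h k‖ ^ 2 := by
  obtain ⟨d, hMd⟩ := hdvd
  have hdpos : 0 < d := by
    rcases Nat.eq_zero_or_pos d with hd | hd
    · subst hd; simp [hMd] at hs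
    · exact hd
  have hMdiv : M / M₀ = d := by rw [hMd, Nat.mul_div_cancel_left _ hM₀]
  have hMpos : 0 < M := by rw [hMd]; positivity
  have hMne : (M : ℂ) ≠ 0 := Nat.cast_ne_zero.mpr hMpos.ne'
  have hM₀ne : (M₀ : ℂ) ≠ 0 := Nat.cast_ne_zero.mpr hM₀.ne'
  have hdne : (d : ℂ) ≠ 0 := Nat.cast_ne_zero.mpr hdpos.ne'
  set c := starRingEnd ℂ with hc
  have hconjF : ∀ (i : Fin M₀) (k : Fin M),
      c (F i k) = Complex.exp (2 * Real.pi * Complex.I *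
        ((s : ℂ) + ((i : ℕ) : ℂ) * ((M / M₀ : ℕ) : ℂ)) * ((k : ℕ) : ℂ) / (M : ℂ)) := by
    intro i k
    rw [hF, ← Complex.exp_conj]
    congr 1
    simp only [map_div₀, _root_.map_mul, map_neg, map_ofNat, Complex.conj_I,
      Complex.conj_ofReal, Complex.conj_natCast, _root_.map_add]
    ring
  -- key sum identity
  have key : ∀ k k' : Fin M,
      (∑ i : Fin M₀, F i k * c (F i k')) * (h k * c (h k')) =
        if k' = k then (M₀ : ℂ) * (h k * c (h k)) else 0 := by
    intro k k'
    by_cases hkk : k' = k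
    · subst hkk
      rw [if_pos rfl]
      have h1 : ∀ i : Fin M₀, F i k' * c (F i k') = 1 := by
        intro i
        rw [hconjF, hF, ← Complex.exp_add, ← Complex.exp_zero]
        congr 1
        ring
      have hS : (∑ i : Fin M₀, F i k' * c (F i k')) = (M₀ : ℂ) := by simp [h1]
      rw [hS]
    · rw [if_neg hkk]
      by_cases hk : h k = 0
      · simp [hk]
      by_cases hk' : h k' = 0
      · simp [hk']
      have hkK : (k : ℕ) < K := by by_contra hcc; exact hk (hh k (le_of_not_gt hcc))
      have hk'K : (k' : ℕ) < K := by by_contra hcc; exact hk' (hh k' (le_of_not_gt hcc))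
      suffices hS : (∑ i : Fin M₀, F i k * c (F i k')) = 0 by rw [hS]; ring
      set Δ : ℤ := ((k : ℕ) : ℤ) - ((k' : ℕ) : ℤ) with hΔdef
      have hΔne : Δ ≠ 0 := by
        intro hcc
        apply hkk
        have : (k' : ℕ) = (k : ℕ) := by omega
        exact Fin.ext this
      have hΔlt : Δ.natAbs < M₀ := by
        have h1 : (k : ℕ) < M₀ := lt_of_lt_of_le hkK hK
        have h2 : (k' : ℕ) < M₀ := lt_of_lt_of_le hk'K hK
        omega
      set ζ : ℂ := Complex.exp (-2 * Real.pi * Complex.I * (Δ : ℂ) / (M₀ : ℂ)) with hζdef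
      have hterm : ∀ i : Fin M₀, F i k * c (F i k') =
          Complex.exp (-2 * Real.pi * Complex.I * (s : ℂ) * (Δ : ℂ) / (M : ℂ)) * ζ ^ (i : ℕ) := by
        intro i
        rw [hconjF, hF, hζdef, ← Complex.exp_nat_mul, ← Complex.exp_add, ← Complex.exp_add]
        congr 1
        have hMc : (M : ℂ) = (M₀ : ℂ) * (d : ℂ) := by push_cast [hMd]; ring
        rw [hMdiv]
        have hΔc : ((Δ : ℂ)) = ((k : ℕ) : ℂ) - ((k' : ℕ) : ℂ) := by push_cast [hΔdef]; ring
        rw [hΔc]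
        field_simp [hMc]
        rw [hMc]; ring
      have hζM₀ : ζ ^ M₀ = 1 := by
        rw [hζdef, ← Complex.exp_nat_mul]
        have heq : (M₀ : ℂ) * (-2 * Real.pi * Complex.I * (Δ : ℂ) / (M₀ : ℂ)) =
            ((-Δ : ℤ) : ℂ) * (2 * Real.pi * Complex.I) := by
          field_simp
          push_cast
          ring
        rw [heq, Complex.exp_int_mul_two_pi_mul_I]
      have h2πI : (2 * (Real.pi : ℂ) * Complex.I) ≠ 0 := by
        simp [Real.pi_ne_zero, Complex.I_ne_zero, Complex.ofReal_ne_zero]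
      have hζne : ζ ≠ 1 := by
        intro hone
        rw [hζdef, Complex.exp_eq_one_iff] at hone
        obtain ⟨n, hn⟩ := hone
        have h1 : (2 * (Real.pi : ℂ) * Complex.I) * (-(Δ : ℂ) / (M₀ : ℂ)) =
            (2 * (Real.pi : ℂ) * Complex.I) * (n : ℂ) := by
          linear_combination hn
        have h2 : -(Δ : ℂ) / (M₀ : ℂ) = (n : ℂ) := mul_left_cancel₀ h2πI h1
        have h3 : -(Δ : ℂ) = (n : ℂ) * (M₀ : ℂ) := by
          rw [div_eq_iff hM₀ne] at h2; exact h2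
        have h4 : -Δ = n * (M₀ : ℤ) := by exact_mod_cast h3
        have h5 : Δ.natAbs = n.natAbs * M₀ := by
          have := congrArg Int.natAbs h4
          simpa [Int.natAbs_mul] using this
        rcases Nat.eq_zero_or_pos n.natAbs with h6 | h6
        · simp [h6] at h5; omega
        · nlinarith
      simp only [hterm]
      rw [← Finset.mul_sum]
      rw [Fin.sum_univ_eq_sum_range (fun i => ζ ^ i), geom_sum_eq hζne, hζM₀]
      simp
  -- assemble
  have hC : ∑ i : Fin M₀, ((F *ᵥ h) i * c ((F *ᵥ h) i)) = (M₀ : ℂ) * ∑ k, (h k * c (h k)) := by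
    have expand : ∀ i : Fin M₀, (F *ᵥ h) i * c ((F *ᵥ h) i) =
        ∑ k, ∑ k', (F i k * c (F i k')) * (h k * c (h k')) := by
      intro i
      simp only [Matrix.mulVec, dotProduct, map_sum, _root_.map_mul, Finset.sum_mul_sum]
      apply Finset.sum_congr rfl
      intro k _
      apply Finset.sum_congr rfl
      intro k' _
      ring
    calc ∑ i : Fin M₀, ((F *ᵥ h) i * c ((F *ᵥ h) i))
        = ∑ i : Fin M₀, ∑ k, ∑ k', (F i k * c (F i k')) * (h k * c (h k')) := by
          exact Finset.sum_congr rfl fun i _ => expand i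
      _ = ∑ k, ∑ k', ∑ i : Fin M₀, (F i k * c (F i k')) * (h k * c (h k')) := by
          rw [Finset.sum_comm]
          apply Finset.sum_congr rfl
          intro k _
          rw [Finset.sum_comm]
      _ = ∑ k, ∑ k', (∑ i : Fin M₀, F i k * c (F i k')) * (h k * c (h k')) := by
          simp [Finset.sum_mul]
      _ = ∑ k, ∑ k', if k' = k then (M₀ : ℂ) * (h k * c (h k)) else 0 := by
          apply Finset.sum_congr rfl
          intro k _
          exact Finset.sum_congr rfl fun k' _ => key k k'
      _ = ∑ k, (M₀ : ℂ) * (h k * c (h k)) := by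
          apply Finset.sum_congr rfl
          intro k _
          simp
      _ = (M₀ : ℂ) * ∑ k, (h k * c (h k)) := by rw [Finset.mul_sum]
  have hCre : ∑ i : Fin M₀, Complex.normSq ((F *ᵥ h) i) = M₀ * ∑ k, Complex.normSq (h k) := by
    have := hC
    simp only [hc, Complex.mul_conj] at this
    push_cast at this
    exact_mod_cast this
  simp only [Complex.sq_norm]
  rw [hCre]
  have : (M₀ : ℝ) ≠ 0 := Nat.cast_ne_zero.mpr hM₀.ne'
  field_simp
end

section
/- Let M and M₀ be positive integers with M₀ dividing M, set d = M/M₀, fix an integer offset s with 0 ≤ s < d, and let F̄ be the M₀×M partial DFT matrix with entries F̄_{i,k} = exp(−2πi·(s + i·d)·k / M). Let K be an integer with K ≤ M₀ and let G be an M×(N+1) complex matrix whose rows with index ≥ K are all zero. Then Gᴴ F̄ᴴ F̄ G = M₀ · Gᴴ G. -/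
open Matrix

lemma root_sum_eq_zero (M₀ : ℕ) (t : ℤ) (ht : t ≠ 0) (hta : t.natAbs < M₀) :
    ∑ i ∈ Finset.range M₀, (Complex.exp (2 * Real.pi * Complex.I * t / M₀)) ^ i = 0 := by
  have hM₀ : (0:ℕ) < M₀ := lt_of_le_of_lt (Nat.zero_le _) hta
  have hM₀C : (M₀ : ℂ) ≠ 0 := Nat.cast_ne_zero.mpr hM₀.ne'
  have h2πI : (2 * (Real.pi : ℂ) * Complex.I) ≠ 0 := by
    simp [Real.pi_ne_zero, Complex.I_ne_zero, Complex.ofReal_ne_zero]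
  set x := Complex.exp (2 * Real.pi * Complex.I * t / M₀) with hx
  have hx1 : x ≠ 1 := by
    intro h
    rw [hx, Complex.exp_eq_one_iff] at h
    obtain ⟨n, hn⟩ := h
    have h' : (2 * (Real.pi:ℂ) * Complex.I) * t = (2 * (Real.pi:ℂ) * Complex.I) * (n * M₀) := by
      field_simp at hn
      linear_combination (2 * (Real.pi:ℂ) * Complex.I) * hn
    have ht' : (t : ℂ) = (n * M₀ : ℤ) := by
      push_cast
      exact mul_left_cancel₀ h2πI h'
    have hteq : t = n * M₀ := by exact_mod_cast ht'
    have hn0 : n ≠ 0 := by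
      rintro rfl; simp at hteq; exact ht hteq
    have h1 : 1 ≤ n.natAbs := Int.natAbs_pos.mpr hn0
    have h2 : t.natAbs = n.natAbs * M₀ := by
      rw [hteq, Int.natAbs_mul, Int.natAbs_natCast]
    nlinarith [hta, h1, h2]
  have hxM : x ^ M₀ = 1 := by
    rw [hx, ← Complex.exp_nat_mul]
    have : (M₀:ℂ) * (2 * Real.pi * Complex.I * t / M₀) = t * (2 * Real.pi * Complex.I) := by
      field_simp
    rw [this, Complex.exp_int_mul_two_pi_mul_I]
  rw [geom_sum_eq hx1, hxM, sub_self, zero_div]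

/-- Equation (A·8): with `F̄` the partial DFT matrix formed by rows
`s, s+d, …, s+(M₀-1)d` of the `M × M` DFT matrix (`d = M / M₀`) and `G` an
`M × (N+1)` matrix whose rows of index `≥ K` vanish (`K ≤ M₀`), one has
`Gᴴ F̄ᴴ F̄ G = M₀ · Gᴴ G`. -/
theorem stmt_7 (M M₀ N K : ℕ) (hM₀ : 0 < M₀) (hdvd : M₀ ∣ M) (s : ℕ)
    (hs : s < M / M₀) (hK : K ≤ M₀)
    (F : Matrix (Fin M₀) (Fin M) ℂ)
    (hF : ∀ (i : Fin M₀) (k : Fin M),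
      F i k = Complex.exp (-2 * Real.pi * Complex.I *
        ((s : ℂ) + ((i : ℕ) : ℂ) * ((M / M₀ : ℕ) : ℂ)) * ((k : ℕ) : ℂ) / (M : ℂ)))
    (G : Matrix (Fin M) (Fin (N + 1)) ℂ)
    (hG : ∀ i : Fin M, K ≤ (i : ℕ) → ∀ j, G i j = 0) :
    Gᴴ * (Fᴴ * F) * G = (M₀ : ℂ) • (Gᴴ * G) := by
  set d : ℕ := M / M₀ with hd
  have hd0 : 0 < d := lt_of_le_of_lt (Nat.zero_le _) hs
  have hMd : M = M₀ * d := (Nat.mul_div_cancel' hdvd).symm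
  have hM₀C : (M₀ : ℂ) ≠ 0 := Nat.cast_ne_zero.mpr hM₀.ne'
  have hdC : (d : ℂ) ≠ 0 := Nat.cast_ne_zero.mpr hd0.ne'
  have hMC : (M : ℂ) = (M₀ : ℂ) * d := by rw [hMd]; push_cast; ring
  -- term identity
  have hterm : ∀ (i : Fin M₀) (k l : Fin M),
      (starRingEnd ℂ) (F i k) * F i l =
        Complex.exp (2 * Real.pi * Complex.I * s * (((k:ℕ):ℂ) - ((l:ℕ):ℂ)) / M) *
          (Complex.exp (2 * Real.pi * Complex.I * (((k:ℕ):ℂ) - ((l:ℕ):ℂ)) / M₀)) ^ (i:ℕ) := by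
    intro i k l
    rw [hF i k, hF i l, ← Complex.exp_conj, ← Complex.exp_nat_mul, ← Complex.exp_add]
    rw [← Complex.exp_add]
    congr 1
    simp only [map_div₀, _root_.map_mul, map_add, map_neg, map_ofNat, Complex.conj_I,
      Complex.conj_ofReal, map_natCast]
    rw [hMC]
    field_simp
    ring
  -- the key sum
  have hsum : ∀ (k l : Fin M), (k:ℕ) < M₀ → (l:ℕ) < M₀ →
      ∑ i : Fin M₀, (starRingEnd ℂ) (F i k) * F i l = if k = l then (M₀:ℂ) else 0 := by
    intro k l hk hl
    by_cases hkl : k = l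
    · subst hkl
      simp only [hterm, sub_self, mul_zero, zero_mul, zero_div, Complex.exp_zero, one_pow,
        mul_one, if_true]
      simp
    · simp only [hterm, if_neg hkl, ← Finset.mul_sum]
      have hne : ((k:ℕ):ℤ) - ((l:ℕ):ℤ) ≠ 0 := by
        have : (k:ℕ) ≠ (l:ℕ) := fun h => hkl (Fin.ext h)
        omega
      have hna : (((k:ℕ):ℤ) - ((l:ℕ):ℤ)).natAbs < M₀ := by omega
      have := root_sum_eq_zero M₀ (((k:ℕ):ℤ) - ((l:ℕ):ℤ)) hne hna
      rw [Fin.sum_univ_eq_sum_range (fun i =>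
        (Complex.exp (2 * Real.pi * Complex.I * (((k:ℕ):ℂ) - ((l:ℕ):ℂ)) / M₀)) ^ i)]
      have hcast : ((((k:ℕ):ℤ) - ((l:ℕ):ℤ) : ℤ) : ℂ) = ((k:ℕ):ℂ) - ((l:ℕ):ℂ) := by push_cast; ring
      rw [← hcast, this, mul_zero]
  -- entrywise
  ext a b
  have lhs_eq : (Gᴴ * (Fᴴ * F) * G) a b =
      ∑ k : Fin M, ∑ l : Fin M,
        (starRingEnd ℂ) (G k a) * (∑ i : Fin M₀, (starRingEnd ℂ) (F i k) * F i l) * G l b := by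
    simp only [Matrix.mul_apply, conjTranspose_apply, Finset.sum_mul, Finset.mul_sum]
    rw [Finset.sum_comm]
    apply Finset.sum_congr rfl; intro k _
    apply Finset.sum_congr rfl; intro l _
    apply Finset.sum_congr rfl; intro i _
    simp only [starRingEnd_apply]
    try ring
  rw [lhs_eq]
  have step : ∀ k l : Fin M,
      (starRingEnd ℂ) (G k a) * (∑ i : Fin M₀, (starRingEnd ℂ) (F i k) * F i l) * G l b =
        if k = l then (M₀:ℂ) * ((starRingEnd ℂ) (G k a) * G k b) else 0 := by
    intro k l
    by_cases hkK : (k:ℕ) < K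
    · by_cases hlK : (l:ℕ) < K
      · rw [hsum k l (lt_of_lt_of_le hkK hK) (lt_of_lt_of_le hlK hK)]
        by_cases hkl : k = l
        · subst hkl; simp only [eq_self_iff_true, if_true]; ring
        · rw [if_neg hkl, if_neg hkl, mul_zero, zero_mul]
      · rw [hG l (le_of_not_gt hlK) b, mul_zero]
        by_cases hkl : k = l
        · subst hkl; rw [hG k (le_of_not_gt hlK) b]; simp
        · rw [if_neg hkl]
    · rw [hG k (le_of_not_gt hkK) a, map_zero, zero_mul, zero_mul]
      by_cases hkl : k = l
      · subst hkl; simp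
      · rw [if_neg hkl]
  simp only [step]
  simp only [Finset.sum_ite_eq, Finset.mem_univ, if_true]
  rw [Matrix.smul_apply, Matrix.mul_apply, smul_eq_mul, Finset.mul_sum]
  apply Finset.sum_congr rfl; intro k _
  simp only [conjTranspose_apply, starRingEnd_apply]
  try ring
end

section
/- Let M and M₀ be positive integers with M₀ dividing M, set d = M/M₀, fix an offset s with 0 ≤ s < d, and let F̄ be the M₀×M partial DFT matrix with entries F̄_{i,k} = exp(−2πi·(s + i·d)·k / M). Let K ≤ M₀ and let G be a fixed M×(N+1) complex matrix whose rows with index ≥ K are zero. Let (Ω, 𝒫) be a probability space, let x : Ω → ℂ^{M₀} be a square-integrable random vector with E[|x_i|²] = P/M for every coordinate i (P > 0 a constant), and let z : Ω → ℂ^{M₀} be a square-integrable random vector independent of x with E[z] = 0 and E[‖z‖²] = M₀·σ². Then for every v ∈ ℂ^{N+1}: (1/M₀)·E[‖diag(x)·F̄ G v + z‖²] = (P/M)·vᴴ Gᴴ G v + σ². -/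
open Matrix MeasureTheory ProbabilityTheory


lemma geom_orth (M₀ : ℕ) (hM₀ : 0 < M₀) (t : ℤ) (ht : t ≠ 0) (htlt : t.natAbs < M₀) :
    ∑ i : Fin M₀, Complex.exp (2 * Real.pi * Complex.I * (t : ℂ) / (M₀ : ℂ)) ^ (i : ℕ) = 0 := by
  set r : ℂ := Complex.exp (2 * Real.pi * Complex.I * (t : ℂ) / (M₀ : ℂ)) with hr
  have hM₀C : (M₀ : ℂ) ≠ 0 := Nat.cast_ne_zero.2 hM₀.ne'
  have hrM : r ^ M₀ = 1 := by
    rw [hr, ← Complex.exp_nat_mul]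
    have : (M₀ : ℂ) * (2 * Real.pi * Complex.I * (t : ℂ) / (M₀ : ℂ)) = (t : ℂ) * (2 * Real.pi * Complex.I) := by
      field_simp
    rw [this]
    exact_mod_cast Complex.exp_int_mul_two_pi_mul_I t
  have hr1 : r ≠ 1 := by
    rw [hr]
    intro h
    rcases Complex.exp_eq_one_iff.1 h with ⟨n, hn⟩
    have : (t : ℂ) = (n : ℂ) * (M₀ : ℂ) := by
      have hpi : (Real.pi : ℂ) ≠ 0 := Complex.ofReal_ne_zero.2 Real.pi_ne_zero
      have hI : Complex.I ≠ 0 := Complex.I_ne_zero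
      field_simp at hn
      have h2 : (2 * (Real.pi:ℂ) * Complex.I) * (t:ℂ) = (2 * (Real.pi:ℂ) * Complex.I) * ((n:ℂ) * (M₀:ℂ)) := by
        linear_combination (2 * (Real.pi:ℂ) * Complex.I) * hn
      exact mul_left_cancel₀ (by simp [hpi, hI]) h2
    have ht' : t = n * M₀ := by exact_mod_cast this
    rcases eq_or_ne n 0 with rfl | hn0
    · simp at ht'; exact ht ht'
    · have : (M₀ : ℤ) ≤ |t| := by
        rw [ht', abs_mul]
        calc (M₀:ℤ) = 1 * |(M₀:ℤ)| := by simp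
        _ ≤ |n| * |(M₀:ℤ)| := by
            apply mul_le_mul_of_nonneg_right _ (abs_nonneg _)
            exact Int.one_le_abs hn0
      have : (M₀ : ℤ) ≤ t.natAbs := by rwa [Int.abs_eq_natAbs] at this
      omega
  rw [Fin.sum_univ_eq_sum_range (fun i => r ^ i), geom_sum_eq hr1, hrM]
  simp

lemma dft_sum (M M₀ : ℕ) (hM₀ : 0 < M₀) (hdvd : M₀ ∣ M) (s : ℕ)
    (hs : s < M / M₀)
    (F : Matrix (Fin M₀) (Fin M) ℂ)
    (hF : ∀ (i : Fin M₀) (k : Fin M),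
      F i k = Complex.exp (-2 * Real.pi * Complex.I *
        ((s : ℂ) + ((i : ℕ) : ℂ) * ((M / M₀ : ℕ) : ℂ)) * ((k : ℕ) : ℂ) / (M : ℂ)))
    (k l : Fin M) (hk : (k : ℕ) < M₀) (hl : (l : ℕ) < M₀) :
    ∑ i : Fin M₀, (starRingEnd ℂ) (F i k) * F i l = if k = l then (M₀ : ℂ) else 0 := by
  have hd : 0 < M / M₀ := lt_of_le_of_lt (Nat.zero_le s) hs
  have hMc : (M : ℂ) = ((M / M₀ : ℕ) : ℂ) * (M₀ : ℂ) := by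
    exact_mod_cast congrArg (Nat.cast : ℕ → ℂ) (Nat.div_mul_cancel hdvd).symm
  have hM₀C : (M₀ : ℂ) ≠ 0 := Nat.cast_ne_zero.2 hM₀.ne'
  have hdC : ((M / M₀ : ℕ) : ℂ) ≠ 0 := Nat.cast_ne_zero.2 hd.ne'
  have hMC : (M : ℂ) ≠ 0 := by rw [hMc]; exact mul_ne_zero hdC hM₀C
  set t : ℤ := (k : ℕ) - (l : ℕ) with hts
  have hterm : ∀ i : Fin M₀, (starRingEnd ℂ) (F i k) * F i l =
      Complex.exp (2 * Real.pi * Complex.I * (s : ℂ) * (t : ℂ) / (M : ℂ)) *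
        Complex.exp (2 * Real.pi * Complex.I * (t : ℂ) / (M₀ : ℂ)) ^ (i : ℕ) := by
    intro i
    rw [hF, hF, ← Complex.exp_conj, ← Complex.exp_nat_mul, ← Complex.exp_add, ← Complex.exp_add]
    congr 1
    have hconj : (starRingEnd ℂ) (-2 * Real.pi * Complex.I *
        ((s : ℂ) + ((i : ℕ) : ℂ) * ((M / M₀ : ℕ) : ℂ)) * ((k : ℕ) : ℂ) / (M : ℂ))
        = 2 * Real.pi * Complex.I *
        ((s : ℂ) + ((i : ℕ) : ℂ) * ((M / M₀ : ℕ) : ℂ)) * ((k : ℕ) : ℂ) / (M : ℂ) := by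
      simp only [map_div₀, _root_.map_mul, map_neg, map_sub, map_add, Complex.conj_I, map_ofNat,
        map_natCast, Complex.conj_ofReal]
      ring
    rw [hconj]
    have htc : (t : ℂ) = ((k : ℕ) : ℂ) - ((l : ℕ) : ℂ) := by push_cast [hts]; ring
    rw [hMc, htc]
    field_simp
    ring
  rw [Finset.sum_congr rfl (fun i _ => hterm i), ← Finset.mul_sum]
  by_cases hkl : k = l
  · subst hkl
    have ht0 : t = 0 := by omega
    simp [ht0, if_pos]
  · rw [if_neg hkl]
    have ht : t ≠ 0 := by
      have : (k : ℕ) ≠ (l : ℕ) := fun h => hkl (Fin.ext h)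
      omega
    have htlt : t.natAbs < M₀ := by omega
    rw [geom_orth M₀ hM₀ t ht htlt, mul_zero]

lemma key_det (M M₀ K : ℕ) (hM₀ : 0 < M₀) (hdvd : M₀ ∣ M) (s : ℕ)
    (hs : s < M / M₀) (hK : K ≤ M₀)
    (F : Matrix (Fin M₀) (Fin M) ℂ)
    (hF : ∀ (i : Fin M₀) (k : Fin M),
      F i k = Complex.exp (-2 * Real.pi * Complex.I *
        ((s : ℂ) + ((i : ℕ) : ℂ) * ((M / M₀ : ℕ) : ℂ)) * ((k : ℕ) : ℂ) / (M : ℂ)))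
    (w : Fin M → ℂ) (hw : ∀ k : Fin M, K ≤ (k : ℕ) → w k = 0) :
    ∑ i : Fin M₀, (Complex.normSq ((F *ᵥ w) i) : ℂ)
      = (M₀ : ℂ) * ∑ k : Fin M, (Complex.normSq (w k) : ℂ) := by
  have hy : ∀ i, (F *ᵥ w) i = ∑ k, F i k * w k := by
    intro i; simp [Matrix.mulVec, dotProduct]
  calc ∑ i : Fin M₀, (Complex.normSq ((F *ᵥ w) i) : ℂ)
      = ∑ i : Fin M₀, ∑ k, ∑ l, ((starRingEnd ℂ) (w k) * w l) *
          ((starRingEnd ℂ) (F i k) * F i l) := by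
        refine Finset.sum_congr rfl fun i _ => ?_
        rw [Complex.normSq_eq_conj_mul_self, hy, map_sum, Finset.sum_mul_sum]
        refine Finset.sum_congr rfl fun k _ => Finset.sum_congr rfl fun l _ => ?_
        simp only [_root_.map_mul]
        ring
    _ = ∑ k, ∑ l, ((starRingEnd ℂ) (w k) * w l) *
          ∑ i : Fin M₀, ((starRingEnd ℂ) (F i k) * F i l) := by
        rw [Finset.sum_comm]
        refine Finset.sum_congr rfl fun k _ => ?_
        rw [Finset.sum_comm]
        refine Finset.sum_congr rfl fun l _ => ?_
        rw [Finset.mul_sum]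
    _ = ∑ k, ∑ l, (if k = l then (M₀ : ℂ) * ((starRingEnd ℂ) (w k) * w k) else 0) := by
        refine Finset.sum_congr rfl fun k _ => Finset.sum_congr rfl fun l _ => ?_
        by_cases hkl : k = l
        · subst hkl
          rw [if_pos rfl]
          by_cases hkK : (k : ℕ) < K
          · rw [dft_sum M M₀ hM₀ hdvd s hs F hF k k (lt_of_lt_of_le hkK hK)
              (lt_of_lt_of_le hkK hK), if_pos rfl]
            ring
          · simp [hw k (le_of_not_gt hkK)]
        · rw [if_neg hkl]
          by_cases hkK : (k : ℕ) < K
          · by_cases hlK : (l : ℕ) < K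
            · rw [dft_sum M M₀ hM₀ hdvd s hs F hF k l (lt_of_lt_of_le hkK hK)
                (lt_of_lt_of_le hlK hK), if_neg hkl]
              ring
            · simp [hw l (le_of_not_gt hlK)]
          · simp [hw k (le_of_not_gt hkK)]
    _ = (M₀ : ℂ) * ∑ k : Fin M, (Complex.normSq (w k) : ℂ) := by
        rw [Finset.mul_sum]
        refine Finset.sum_congr rfl fun k _ => ?_
        rw [Finset.sum_ite_eq Finset.univ k
          (fun l => (M₀ : ℂ) * ((starRingEnd ℂ) (w k) * w k))]
        simp [Complex.normSq_eq_conj_mul_self]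



/-- Lemma 0 for a fixed channel realization `G`: the expected reference-signal
received power over the `M₀` uniformly spaced subcarriers, under random OFDM
symbols `x` with `E[|x_i|²] = P/M` and independent zero-mean noise `z` with
`E[‖z‖²] = M₀ σ²`, equals `(P/M)·vᴴ Gᴴ G v + σ²` for every IRS reflection
vector `v`. -/
theorem stmt_13 {Ω : Type*} [MeasurableSpace Ω] (μ : Measure Ω)
    [IsProbabilityMeasure μ]
    (M M₀ N K : ℕ) (hM₀ : 0 < M₀) (hdvd : M₀ ∣ M) (s : ℕ)
    (hs : s < M / M₀) (hK : K ≤ M₀)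
    (F : Matrix (Fin M₀) (Fin M) ℂ)
    (hF : ∀ (i : Fin M₀) (k : Fin M),
      F i k = Complex.exp (-2 * Real.pi * Complex.I *
        ((s : ℂ) + ((i : ℕ) : ℂ) * ((M / M₀ : ℕ) : ℂ)) * ((k : ℕ) : ℂ) / (M : ℂ)))
    (G : Matrix (Fin M) (Fin (N + 1)) ℂ)
    (hG : ∀ i : Fin M, K ≤ (i : ℕ) → ∀ j, G i j = 0)
    (x z : Ω → Fin M₀ → ℂ) (hx : Measurable x) (hz : Measurable z)
    (hxL : ∀ i, MemLp (fun ω => x ω i) 2 μ)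
    (hzL : ∀ i, MemLp (fun ω => z ω i) 2 μ)
    (P σ : ℝ) (hP : 0 < P)
    (hxpow : ∀ i, ∫ ω, ‖x ω i‖ ^ 2 ∂μ = P / M)
    (hind : IndepFun x z μ)
    (hzmean : ∀ i, ∫ ω, z ω i ∂μ = 0)
    (hzpow : ∫ ω, ∑ i, ‖z ω i‖ ^ 2 ∂μ = M₀ * σ ^ 2) :
    ∀ v : Fin (N + 1) → ℂ,
      (((1 / M₀ : ℝ) * ∫ ω, ∑ i,
          ‖(Matrix.diagonal (x ω) *ᵥ (F *ᵥ (G *ᵥ v))) i + z ω i‖ ^ 2 ∂μ : ℝ) : ℂ)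
        = ((P / M : ℝ) : ℂ) * (star v ⬝ᵥ (Gᴴ * G) *ᵥ v) + ((σ ^ 2 : ℝ) : ℂ) := by
  intro v
  set w : Fin M → ℂ := G *ᵥ v with hwdef
  set y : Fin M₀ → ℂ := F *ᵥ w with hydef
  -- support of w
  have hwsupp : ∀ k : Fin M, K ≤ (k : ℕ) → w k = 0 := by
    intro k hk
    simp only [hwdef, Matrix.mulVec, dotProduct]
    exact Finset.sum_eq_zero fun j _ => by rw [hG k hk j, zero_mul]
  -- pointwise expansion
  have hpt : ∀ ω, ∑ i, ‖(Matrix.diagonal (x ω) *ᵥ y) i + z ω i‖ ^ 2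
      = ∑ i, (‖x ω i‖ ^ 2 * ‖y i‖ ^ 2 + ‖z ω i‖ ^ 2
          + 2 * ((x ω i * y i) * (starRingEnd ℂ) (z ω i)).re) := by
    intro ω
    refine Finset.sum_congr rfl fun i _ => ?_
    rw [Matrix.mulVec_diagonal]
    simp only [Complex.sq_norm]
    rw [Complex.normSq_add, map_mul Complex.normSq]
  -- integrability of squares
  have hx2 : ∀ i, Integrable (fun ω => ‖x ω i‖ ^ 2) μ := fun i => by
    simpa using (memLp_two_iff_integrable_sq_norm (hxL i).1).mp (hxL i)
  have hz2 : ∀ i, Integrable (fun ω => ‖z ω i‖ ^ 2) μ := fun i => by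
    simpa using (memLp_two_iff_integrable_sq_norm (hzL i).1).mp (hzL i)
  have hxi1 : ∀ i, Integrable (fun ω => x ω i) μ := fun i => (hxL i).integrable one_le_two
  have hzi1 : ∀ i, Integrable (fun ω => z ω i) μ := fun i => (hzL i).integrable one_le_two
  have hxr : ∀ i, Integrable (fun ω => (x ω i).re) μ := fun i => by
    simpa [RCLike.re_to_complex] using (hxi1 i).re
  have hxim : ∀ i, Integrable (fun ω => (x ω i).im) μ := fun i => by
    simpa [RCLike.im_to_complex] using (hxi1 i).im
  have hzr : ∀ i, Integrable (fun ω => (z ω i).re) μ := fun i => by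
    simpa [RCLike.re_to_complex] using (hzi1 i).re
  have hzim : ∀ i, Integrable (fun ω => (z ω i).im) μ := fun i => by
    simpa [RCLike.im_to_complex] using (hzi1 i).im
  have hzr0 : ∀ i, ∫ ω, (z ω i).re ∂μ = 0 := fun i => by
    have h := integral_re (hzi1 i)
    rw [hzmean i] at h
    simpa [RCLike.re_to_complex] using h
  have hzim0 : ∀ i, ∫ ω, (z ω i).im ∂μ = 0 := fun i => by
    have h := integral_im (hzi1 i)
    rw [hzmean i] at h
    simpa [RCLike.im_to_complex] using h
  -- cross term: integrable and zero integral
  have hC : ∀ i : Fin M₀,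
      Integrable (fun ω => 2 * ((x ω i * y i) * (starRingEnd ℂ) (z ω i)).re) μ ∧
      ∫ ω, 2 * ((x ω i * y i) * (starRingEnd ℂ) (z ω i)).re ∂μ = 0 := by
    intro i
    have mre : Measurable (fun u : Fin M₀ → ℂ => (u i).re) :=
      Complex.measurable_re.comp (measurable_pi_apply i)
    have mim : Measurable (fun u : Fin M₀ → ℂ => (u i).im) :=
      Complex.measurable_im.comp (measurable_pi_apply i)
    have irr : IndepFun (fun ω => (x ω i).re) (fun ω => (z ω i).re) μ := hind.comp mre mre
    have iir : IndepFun (fun ω => (x ω i).im) (fun ω => (z ω i).re) μ := hind.comp mim mre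
    have iri : IndepFun (fun ω => (x ω i).re) (fun ω => (z ω i).im) μ := hind.comp mre mim
    have iii : IndepFun (fun ω => (x ω i).im) (fun ω => (z ω i).im) μ := hind.comp mim mim
    have p1 : Integrable (fun ω => (x ω i).re * (z ω i).re) μ :=
      irr.integrable_mul (hxr i) (hzr i)
    have p2 : Integrable (fun ω => (x ω i).im * (z ω i).re) μ :=
      iir.integrable_mul (hxim i) (hzr i)
    have p3 : Integrable (fun ω => (x ω i).re * (z ω i).im) μ :=
      iri.integrable_mul (hxr i) (hzim i)
    have p4 : Integrable (fun ω => (x ω i).im * (z ω i).im) μ :=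
      iii.integrable_mul (hxim i) (hzim i)
    have e1 : ∫ ω, (x ω i).re * (z ω i).re ∂μ = 0 := by
      rw [irr.integral_fun_mul_eq_mul_integral (hxr i).1 (hzr i).1, hzr0 i, mul_zero]
    have e2 : ∫ ω, (x ω i).im * (z ω i).re ∂μ = 0 := by
      rw [iir.integral_fun_mul_eq_mul_integral (hxim i).1 (hzr i).1, hzr0 i, mul_zero]
    have e3 : ∫ ω, (x ω i).re * (z ω i).im ∂μ = 0 := by
      rw [iri.integral_fun_mul_eq_mul_integral (hxr i).1 (hzim i).1, hzim0 i, mul_zero]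
    have e4 : ∫ ω, (x ω i).im * (z ω i).im ∂μ = 0 := by
      rw [iii.integral_fun_mul_eq_mul_integral (hxim i).1 (hzim i).1, hzim0 i, mul_zero]
    have hfun : (fun ω => 2 * ((x ω i * y i) * (starRingEnd ℂ) (z ω i)).re)
        = fun ω => (2 * (y i).re) * ((x ω i).re * (z ω i).re)
            + (-(2 * (y i).im)) * ((x ω i).im * (z ω i).re)
            + (2 * (y i).im) * ((x ω i).re * (z ω i).im)
            + (2 * (y i).re) * ((x ω i).im * (z ω i).im) := by
      funext ω
      simp only [Complex.mul_re, Complex.mul_im, Complex.conj_re, Complex.conj_im]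
      ring
    have q1 : Integrable (fun ω => (2 * (y i).re) * ((x ω i).re * (z ω i).re)) μ :=
      p1.const_mul _
    have q2 : Integrable (fun ω => (-(2 * (y i).im)) * ((x ω i).im * (z ω i).re)) μ :=
      p2.const_mul _
    have q3 : Integrable (fun ω => (2 * (y i).im) * ((x ω i).re * (z ω i).im)) μ :=
      p3.const_mul _
    have q4 : Integrable (fun ω => (2 * (y i).re) * ((x ω i).im * (z ω i).im)) μ :=
      p4.const_mul _
    have q12 : Integrable (fun ω => (2 * (y i).re) * ((x ω i).re * (z ω i).re)
        + (-(2 * (y i).im)) * ((x ω i).im * (z ω i).re)) μ := q1.add q2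
    have q123 : Integrable (fun ω => (2 * (y i).re) * ((x ω i).re * (z ω i).re)
        + (-(2 * (y i).im)) * ((x ω i).im * (z ω i).re)
        + (2 * (y i).im) * ((x ω i).re * (z ω i).im)) μ := q12.add q3
    constructor
    · rw [hfun]
      exact q123.add q4
    · rw [hfun, integral_add q123 q4, integral_add q12 q3, integral_add q1 q2,
        integral_const_mul, integral_const_mul, integral_const_mul, integral_const_mul,
        e1, e2, e3, e4]
      ring
  -- main integral computation
  have hIeq : ∫ ω, ∑ i, ‖(Matrix.diagonal (x ω) *ᵥ y) i + z ω i‖ ^ 2 ∂μ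
      = (P / M) * (∑ i, ‖y i‖ ^ 2) + M₀ * σ ^ 2 := by
    rw [integral_congr_ae (Filter.Eventually.of_forall hpt)]
    rw [integral_finset_sum _ (fun i _ =>
      show Integrable (fun ω => ‖x ω i‖ ^ 2 * ‖y i‖ ^ 2
          + ‖z ω i‖ ^ 2
          + 2 * ((x ω i * y i) * (starRingEnd ℂ) (z ω i)).re) μ from
        (((hx2 i).mul_const _).add (hz2 i)).add (hC i).1)]
    have hterm : ∀ i : Fin M₀, ∫ ω, (‖x ω i‖ ^ 2 * ‖y i‖ ^ 2
        + ‖z ω i‖ ^ 2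
        + 2 * ((x ω i * y i) * (starRingEnd ℂ) (z ω i)).re) ∂μ
        = (P / M) * ‖y i‖ ^ 2 + ∫ ω, ‖z ω i‖ ^ 2 ∂μ := by
      intro i
      rw [integral_add (show Integrable (fun ω => ‖x ω i‖ ^ 2
            * ‖y i‖ ^ 2 + ‖z ω i‖ ^ 2) μ from
          ((hx2 i).mul_const _).add (hz2 i)) (hC i).1,
        integral_add ((hx2 i).mul_const _) (hz2 i), (hC i).2,
        integral_mul_const, hxpow i]
      ring
    rw [Finset.sum_congr rfl fun i _ => hterm i, Finset.sum_add_distrib,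
      ← Finset.mul_sum, ← integral_finset_sum _ (fun i _ => hz2 i), hzpow]
  -- deterministic identities
  have hdet := key_det M M₀ K hM₀ hdvd s hs hK F hF w hwsupp
  have hSy : ∑ i, ‖y i‖ ^ 2 = M₀ * ∑ k, ‖w k‖ ^ 2 := by
    have : ((∑ i, ‖y i‖ ^ 2 : ℝ) : ℂ)
        = ((M₀ * ∑ k, ‖w k‖ ^ 2 : ℝ) : ℂ) := by
      simp only [Complex.sq_norm]
      push_cast
      exact_mod_cast hdet
    exact_mod_cast this
  have hRHS : star v ⬝ᵥ (Gᴴ * G) *ᵥ v = ((∑ k, ‖w k‖ ^ 2 : ℝ) : ℂ) := by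
    rw [← Matrix.mulVec_mulVec, Matrix.dotProduct_mulVec, ← Matrix.star_mulVec, ← hwdef]
    simp only [Complex.sq_norm]
    push_cast
    simp [dotProduct, Complex.normSq_eq_conj_mul_self]
  rw [hIeq, hRHS, hSy]
  have hM₀C : (M₀ : ℂ) ≠ 0 := Nat.cast_ne_zero.2 hM₀.ne'
  push_cast
  field_simp
end
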